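/- Let $\mathcal{F}$ be an iterated function system generated by similarities on a complete metric space $X$, with similarity dimension $s$ (the unique solution of $\sum_{\phi \in \mathcal{F}} (\operatorname{Lip} \phi)^s = 1$, assuming all ratios are in $(0,1)$). If the attractor $K_{\mathcal{F}}$ satisfies $\mathcal{H}^s(K_{\mathcal{F}}) > 0$, then $K_{\mathcal{F}}$ is Ahlfors $s$-regular: there is a constant $C \geq 1$ with $C^{-1} r^s \leq \mathcal{H}^s(K_{\mathcal{F}} \cap B(x,r)) \leq C r^s$ for all $x \in K_{\mathcal{F}}$ and $0 < r \leq \operatorname{diam} K_{\mathcal{F}}$. -/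

import Mathlib

open Set Metric MeasureTheory
open scoped ENNReal NNReal Topology
set_option linter.unusedSectionVars false

namespace Stmt5Aux

variable {X : Type*} [MetricSpace X] {k : ℕ}

def wcomp (φ : Fin k → X → X) : ∀ n, (Fin n → Fin k) → X → X
  | 0, _ => id
  | n + 1, w => φ (w 0) ∘ wcomp φ n (Fin.tail w)

lemma wcomp_cons (φ : Fin k → X → X) (n : ℕ) (i : Fin k) (w : Fin n → Fin k) :
    wcomp φ (n + 1) (Fin.cons i w) = φ i ∘ wcomp φ n w := by
  simp [wcomp, Fin.tail_cons]

lemma sum_prod_pow (g : Fin k → ℝ≥0∞) :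
    ∀ n, ∑ w : Fin n → Fin k, ∏ j, g (w j) = (∑ i, g i) ^ n
  | 0 => by simp
  | n + 1 => by
    rw [← Equiv.sum_comp (Fin.consEquiv (fun _ : Fin (n + 1) => Fin k))]
    rw [Fintype.sum_prod_type]
    have : ∀ (i : Fin k) (w : Fin n → Fin k),
        (∏ j, g ((Fin.consEquiv (fun _ : Fin (n+1) => Fin k)) (i, w) j))
          = g i * ∏ j, g (w j) := by
      intro i w
      rw [Fin.prod_univ_succ]
      simp [Fin.consEquiv]
    simp_rw [this]
    rw [← Finset.sum_mul_sum]
    rw [sum_prod_pow g n, pow_succ, mul_comm]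

lemma ediam_wcomp_image_le (φ : Fin k → X → X) (c : Fin k → ℝ≥0)
    (hc : ∀ i, LipschitzWith (c i) (φ i)) :
    ∀ n (w : Fin n → Fin k) (A : Set X),
      EMetric.diam (wcomp φ n w '' A) ≤ (∏ j, (c (w j) : ℝ≥0∞)) * EMetric.diam A
  | 0, w, A => by simp [wcomp]
  | n + 1, w, A => by
    have h1 : wcomp φ (n + 1) w '' A = φ (w 0) '' (wcomp φ n (Fin.tail w) '' A) := by
      rw [wcomp, image_comp]
    rw [h1]
    calc EMetric.diam (φ (w 0) '' (wcomp φ n (Fin.tail w) '' A))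
        ≤ (c (w 0) : ℝ≥0∞) * EMetric.diam (wcomp φ n (Fin.tail w) '' A) :=
          (hc (w 0)).ediam_image_le _
      _ ≤ (c (w 0) : ℝ≥0∞) * ((∏ j, (c (Fin.tail w j) : ℝ≥0∞)) * EMetric.diam A) := by
          gcongr
          exact ediam_wcomp_image_le φ c hc n (Fin.tail w) A
      _ = (∏ j, (c (w j) : ℝ≥0∞)) * EMetric.diam A := by
          rw [Fin.prod_univ_succ, mul_assoc]
          rfl

lemma wcomp_image_subset (φ : Fin k → X → X) (K : Set X) (hsub : ∀ i, φ i '' K ⊆ K) :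
    ∀ n (w : Fin n → Fin k), wcomp φ n w '' K ⊆ K
  | 0, w => by simp [wcomp]
  | n + 1, w => by
    rw [wcomp, image_comp]
    exact (image_mono (wcomp_image_subset φ K hsub n (Fin.tail w))).trans (hsub (w 0))

lemma subset_iUnion_wcomp (φ : Fin k → X → X) (K : Set X) (hcov : K ⊆ ⋃ i, φ i '' K) :
    ∀ n, K ⊆ ⋃ w : Fin n → Fin k, wcomp φ n w '' K
  | 0 => fun x hx => mem_iUnion.2 ⟨fun i => i.elim0, by simpa [wcomp] using hx⟩
  | n + 1 => by
    intro x hx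
    rcases mem_iUnion.1 (hcov hx) with ⟨i, y, hy, rfl⟩
    rcases mem_iUnion.1 (subset_iUnion_wcomp φ K hcov n hy) with ⟨w, hw⟩
    refine mem_iUnion.2 ⟨Fin.cons i w, ?_⟩
    rw [wcomp_cons, image_comp]
    exact mem_image_of_mem _ hw


/-- Key covering iteration bound: any countable cover of a self-similar set gives an upper
bound on its Hausdorff measure by the sum of s-th powers of diameters. -/
lemma iterbound (hk : 0 < k) (φ : Fin k → X → X) (c : Fin k → ℝ≥0)
    (hc : ∀ i, LipschitzWith (c i) (φ i)) (hc1 : ∀ i, c i < 1)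
    (K : Set X) (hsub : ∀ i, φ i '' K ⊆ K) (hcov : K ⊆ ⋃ i, φ i '' K)
    {s : ℝ} (hs : 0 < s) (hsum1 : ∑ i, (c i : ℝ≥0∞) ^ s = 1)
    [MeasurableSpace X] [BorelSpace X]
    (U : ℕ → Set X) (hU : K ⊆ ⋃ j, U j) :
    μH[s] K ≤ ∑' j, EMetric.diam (U j) ^ s := by
  set S := ∑' j, EMetric.diam (U j) ^ s with hS
  rcases eq_or_ne S ∞ with hStop | hStop
  · rw [hStop]; exact le_top
  -- uniform bound on the diameters
  set M : ℝ≥0∞ := (S + 1) ^ (1 / s) with hM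
  have hMtop : M ≠ ∞ := by
    apply ENNReal.rpow_ne_top_of_nonneg (by positivity)
    simp [ENNReal.add_ne_top, hStop]
  have hMle : ∀ j, EMetric.diam (U j) ≤ M := by
    intro j
    have h1 : EMetric.diam (U j) ^ s ≤ S + 1 :=
      le_trans (ENNReal.le_tsum j) (le_self_add)
    have := ENNReal.rpow_le_rpow h1 (le_of_lt (by positivity : (0:ℝ) < 1 / s))
    rwa [← ENNReal.rpow_mul, mul_one_div, div_self hs.ne', ENNReal.rpow_one] at this
  -- the maximal contraction ratio
  set Lm : ℝ≥0 := Finset.univ.sup c with hLm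
  have hLmlt : Lm < 1 := by
    rw [hLm]
    apply Finset.sup_lt_iff (by norm_num : (0:ℝ≥0) < 1) |>.2
    intro i _; exact hc1 i
  have hcle : ∀ i, c i ≤ Lm := fun i => Finset.le_sup (Finset.mem_univ i)
  -- mesh sizes
  set r : ℕ → ℝ≥0∞ := fun n => (Lm : ℝ≥0∞) ^ n * M with hr
  have hrt : Filter.Tendsto r Filter.atTop (𝓝 0) := by
    have h1 : Filter.Tendsto (fun n => (Lm : ℝ≥0∞) ^ n) Filter.atTop (𝓝 0) :=
      ENNReal.tendsto_pow_atTop_nhds_zero_of_lt_one (by exact_mod_cast hLmlt)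
    simpa using ENNReal.Tendsto.mul_const h1 (Or.inr hMtop)
  have ht : ∀ n : ℕ, ∀ p : (Fin n → Fin k) × ℕ,
      EMetric.diam (wcomp φ n p.1 '' U p.2) ≤ r n := by
    intro n p
    calc EMetric.diam (wcomp φ n p.1 '' U p.2)
        ≤ (∏ i, (c (p.1 i) : ℝ≥0∞)) * EMetric.diam (U p.2) :=
          ediam_wcomp_image_le φ c hc n p.1 (U p.2)
      _ ≤ (Lm : ℝ≥0∞) ^ n * M := by
          refine mul_le_mul' ?_ (hMle p.2)
          calc (∏ i, (c (p.1 i) : ℝ≥0∞)) ≤ ∏ _i : Fin n, (Lm : ℝ≥0∞) := by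
                gcongr with i
                exact_mod_cast hcle (p.1 i)
            _ = (Lm : ℝ≥0∞) ^ n := by simp
  have hst : ∀ n : ℕ, K ⊆ ⋃ p : (Fin n → Fin k) × ℕ, wcomp φ n p.1 '' U p.2 := by
    intro n x hx
    rcases mem_iUnion.1 (subset_iUnion_wcomp φ K hcov n hx) with ⟨w, y, hy, rfl⟩
    rcases mem_iUnion.1 (hU hy) with ⟨j, hj⟩
    exact mem_iUnion.2 ⟨(w, j), mem_image_of_mem _ hj⟩
  have key := Measure.hausdorffMeasure_le_liminf_tsum (X := X) s K r hrt
      (fun n (p : (Fin n → Fin k) × ℕ) => wcomp φ n p.1 '' U p.2)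
      (Filter.Eventually.of_forall ht) (Filter.Eventually.of_forall hst)
  refine key.trans ?_
  have hbound : ∀ n : ℕ,
      (∑' p : (Fin n → Fin k) × ℕ, EMetric.diam (wcomp φ n p.1 '' U p.2) ^ s) ≤ S := by
    intro n
    have h1 : ∀ (w : Fin n → Fin k) (j : ℕ),
        EMetric.diam (wcomp φ n w '' U j) ^ s
          ≤ (∏ i, ((c (w i) : ℝ≥0∞)) ^ s) * EMetric.diam (U j) ^ s := by
      intro w j
      calc EMetric.diam (wcomp φ n w '' U j) ^ s
          ≤ ((∏ i, (c (w i) : ℝ≥0∞)) * EMetric.diam (U j)) ^ s :=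
            ENNReal.rpow_le_rpow (ediam_wcomp_image_le φ c hc n w (U j)) hs.le
        _ = (∏ i, (c (w i) : ℝ≥0∞)) ^ s * EMetric.diam (U j) ^ s :=
            ENNReal.mul_rpow_of_nonneg _ _ hs.le
        _ = (∏ i, ((c (w i) : ℝ≥0∞)) ^ s) * EMetric.diam (U j) ^ s := by
            rw [ENNReal.prod_rpow_of_nonneg hs.le]
    calc (∑' p : (Fin n → Fin k) × ℕ, EMetric.diam (wcomp φ n p.1 '' U p.2) ^ s)
        ≤ ∑' p : (Fin n → Fin k) × ℕ,
            (∏ i, ((c (p.1 i) : ℝ≥0∞)) ^ s) * EMetric.diam (U p.2) ^ s :=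
          ENNReal.tsum_le_tsum fun p => h1 p.1 p.2
      _ = ∑' w : Fin n → Fin k, ∑' j : ℕ,
            (∏ i, ((c (w i) : ℝ≥0∞)) ^ s) * EMetric.diam (U j) ^ s := ENNReal.tsum_prod'
      _ = ∑' w : Fin n → Fin k, (∏ i, ((c (w i) : ℝ≥0∞)) ^ s) * S := by
          congr 1; ext w; rw [ENNReal.tsum_mul_left]
      _ = (∑ w : Fin n → Fin k, ∏ i, ((c (w i) : ℝ≥0∞)) ^ s) * S := by
          rw [tsum_fintype, Finset.sum_mul]
      _ = S := by
          rw [sum_prod_pow (fun i => ((c i : ℝ≥0∞)) ^ s) n, hsum1, one_pow, one_mul]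
  calc Filter.liminf
        (fun n => ∑' p : (Fin n → Fin k) × ℕ, EMetric.diam (wcomp φ n p.1 '' U p.2) ^ s)
        Filter.atTop
      ≤ Filter.liminf (fun _ : ℕ => S) Filter.atTop :=
        Filter.liminf_le_liminf (Filter.Eventually.of_forall hbound)
    _ = S := Filter.liminf_const S

end Stmt5Aux

open Stmt5Aux in
theorem stmt5 {X : Type*} [MetricSpace X] [CompleteSpace X]
    [MeasurableSpace X] [BorelSpace X]
    {k : ℕ} (hk : 0 < k) (φ : Fin k → X → X) (L : Fin k → ℝ)
    (hL : ∀ i, 0 < L i ∧ L i < 1)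
    (hsim : ∀ i x y, dist (φ i x) (φ i y) = L i * dist x y)
    (s : ℝ) (hs : 0 < s) (hdim : ∑ i, L i ^ s = 1)
    (K : Set X) (hKne : K.Nonempty) (hKc : IsCompact K)
    (hK : K = ⋃ i, φ i '' K)
    (hpos : 0 < μH[s] K) :
    ∃ C : ℝ, 1 ≤ C ∧ ∀ x ∈ K, ∀ r : ℝ, 0 < r → r ≤ Metric.diam K →
      ENNReal.ofReal (C⁻¹ * r ^ s) ≤ μH[s] (K ∩ Metric.closedBall x r) ∧
      μH[s] (K ∩ Metric.closedBall x r) ≤ ENNReal.ofReal (C * r ^ s) := by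
  classical
  have i0 : Fin k := ⟨0, hk⟩
  haveI : Nonempty (Fin k) := ⟨i0⟩
  have hLpos : ∀ i, 0 < L i := fun i => (hL i).1
  have hsub : ∀ i, φ i '' K ⊆ K := by
    intro i
    conv_rhs => rw [hK]
    exact subset_iUnion (fun i => φ i '' K) i
  have hcov : K ⊆ ⋃ i, φ i '' K := le_of_eq hK
  set c : Fin k → ℝ≥0 := fun i => (L i).toNNReal with hc
  have hccoe : ∀ i, ((c i : ℝ) : ℝ) = L i := fun i => Real.coe_toNNReal _ (hLpos i).le
  have hcoe : ∀ i, ((c i : ℝ≥0∞)) = ENNReal.ofReal (L i) := fun i => rfl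
  have hcLip : ∀ i, LipschitzWith (c i) (φ i) := by
    intro i
    apply LipschitzWith.of_dist_le_mul
    intro a b
    rw [hsim i a b, hccoe i]
  have hc1 : ∀ i, c i < 1 := by
    intro i
    rw [hc, ← Real.toNNReal_one]
    exact (Real.toNNReal_lt_toNNReal_iff one_pos).2 (hL i).2
  have hsum1 : ∑ i, (c i : ℝ≥0∞) ^ s = 1 := by
    have h1 : ∀ i, (c i : ℝ≥0∞) ^ s = ENNReal.ofReal (L i ^ s) := by
      intro i
      rw [hcoe i, ← ENNReal.ofReal_rpow_of_pos (hLpos i)]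
    simp_rw [h1]
    rw [← ENNReal.ofReal_sum_of_nonneg (fun i _ => Real.rpow_nonneg (hLpos i).le s), hdim,
      ENNReal.ofReal_one]
  -- finiteness of the measure
  have hDtop : EMetric.diam K ≠ ⊤ := hKc.isBounded.ediam_ne_top
  have hfin : μH[s] K ≠ ∞ := by
    have h1 := iterbound hk φ c hcLip hc1 K hsub hcov hs hsum1
        (fun j => Nat.casesOn j K (fun _ => ∅))
        (fun x hx => mem_iUnion.2 ⟨0, hx⟩)
    have h2 : (∑' j : ℕ, EMetric.diam ((fun j => Nat.casesOn j K (fun _ => ∅) : ℕ → Set X) j) ^ s)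
        = EMetric.diam K ^ s := by
      rw [tsum_eq_zero_add' ENNReal.summable]
      have he : EMetric.diam (∅ : Set X) = 0 := EMetric.diam_empty
      simp [ENNReal.zero_rpow_of_pos hs, he]
    rw [h2] at h1
    exact ne_top_of_le_ne_top (ENNReal.rpow_ne_top_of_nonneg hs.le hDtop) h1
  set mR : ℝ := (μH[s] K).toReal with hmRdef
  have hmR : 0 < mR := ENNReal.toReal_pos hpos.ne' hfin
  have hμK : μH[s] K = ENNReal.ofReal mR := (ENNReal.ofReal_toReal hfin).symm
  set Dr : ℝ := Metric.diam K with hDrdef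
  have hDr : 0 < Dr := by
    rcases lt_or_eq_of_le (Metric.diam_nonneg (s := K)) with h | h
    · exact h
    · exfalso
      have hsub' : K.Subsingleton := by
        rw [← EMetric.diam_eq_zero_iff]
        have h2 : (EMetric.diam K).toReal = 0 := h.symm
        rcases (ENNReal.toReal_eq_zero_iff _).1 h2 with h3 | h3
        · exact h3
        · exact absurd h3 hDtop
      obtain ⟨x0, hx0⟩ := hKne
      have hsing : K ⊆ {x0} := fun y hy => hsub' hy hx0
      haveI := Measure.noAtoms_hausdorff X hs
      have : μH[s] K ≤ μH[s] {x0} := measure_mono hsing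
      rw [measure_singleton] at this
      exact absurd (le_antisymm this zero_le) hpos.ne'
  -- extremal ratios
  set lmin : ℝ := Finset.univ.inf' Finset.univ_nonempty L with hlmin
  have hlminle : ∀ i, lmin ≤ L i := fun i => Finset.inf'_le _ (Finset.mem_univ i)
  have hlminpos : 0 < lmin := by
    rw [hlmin, Finset.lt_inf'_iff]
    exact fun i _ => hLpos i
  have hlmin1 : lmin ≤ 1 := (hlminle i0).trans (hL i0).2.le
  set lmax : ℝ := Finset.univ.sup' Finset.univ_nonempty L with hlmax
  have hlmaxle : ∀ i, L i ≤ lmax := fun i => Finset.le_sup' _ (Finset.mem_univ i)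
  have hlmaxpos : 0 < lmax := lt_of_lt_of_le (hLpos i0) (hlmaxle i0)
  have hlmax1 : lmax < 1 := by
    rw [hlmax, Finset.sup'_lt_iff]
    exact fun i _ => (hL i).2
  refine ⟨max 1 (max ((2:ℝ) ^ s) (Dr ^ s / (mR * lmin ^ s))), le_max_left _ _, ?_⟩
  set C : ℝ := max 1 (max ((2:ℝ) ^ s) (Dr ^ s / (mR * lmin ^ s))) with hCdef
  intro x hxK r hr hrD
  have hrs : (0:ℝ) < r ^ s := Real.rpow_pos_of_pos hr s
  constructor
  · -- LOWER BOUND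
    -- construct a branch of the IFS through x
    have hnxt : ∀ y : {z // z ∈ K}, ∃ p : Fin k × {z // z ∈ K}, φ p.1 p.2 = (y : X) := by
      rintro ⟨y, hy⟩
      rw [hK] at hy
      rcases mem_iUnion.1 hy with ⟨i, z, hz, hzy⟩
      exact ⟨(i, ⟨z, hz⟩), hzy⟩
    choose nxt hnxt' using hnxt
    set sq : ℕ → {z // z ∈ K} := fun n => Nat.rec ⟨x, hxK⟩ (fun _ p => (nxt p).2) n with hsq
    set g : ℕ → Fin k := fun n => (nxt (sq n)).1 with hgdef
    have hstep : ∀ n, φ (g n) ((sq (n+1) : X)) = (sq n : X) := fun n => hnxt' (sq n)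
    set Ψ : ℕ → X → X := fun n => Nat.rec id (fun m Ψm => Ψm ∘ φ (g m)) n with hΨ
    set q : ℕ → ℝ := fun n => ∏ j ∈ Finset.range n, L (g j) with hqdef
    have hqpos : ∀ n, 0 < q n := fun n => Finset.prod_pos fun j _ => hLpos (g j)
    have hmain : ∀ n, Ψ n ((sq n : X)) = x ∧ (∀ a b, dist (Ψ n a) (Ψ n b) = q n * dist a b)
        ∧ Ψ n '' K ⊆ K := by
      intro n
      induction n with
      | zero => exact ⟨rfl, by simp [hΨ, hqdef], by simp [hΨ]⟩
      | succ m ih =>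
        obtain ⟨ih1, ih2, ih3⟩ := ih
        have hcomp : Ψ (m+1) = Ψ m ∘ φ (g m) := rfl
        refine ⟨?_, ?_, ?_⟩
        · rw [hcomp]
          simp only [Function.comp_apply]
          rw [hstep m, ih1]
        · intro a b
          rw [hcomp]
          simp only [Function.comp_apply]
          rw [ih2, hsim, hqdef]
          simp only []
          rw [Finset.prod_range_succ]
          ring
        · rw [hcomp, image_comp]
          exact (image_mono (hsub (g m))).trans ih3
    -- find the right level
    have hqle : ∀ n, q n ≤ lmax ^ n := by
      intro n
      rw [hqdef]
      calc ∏ j ∈ Finset.range n, L (g j) ≤ ∏ _j ∈ Finset.range n, lmax :=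
            Finset.prod_le_prod (fun j _ => (hLpos (g j)).le) (fun j _ => hlmaxle (g j))
        _ = lmax ^ n := by rw [Finset.prod_const, Finset.card_range]
    have hex : ∃ n, q n * Dr ≤ r := by
      have h1 : Filter.Tendsto (fun n : ℕ => lmax ^ n * Dr) Filter.atTop (𝓝 (0 * Dr)) :=
        (tendsto_pow_atTop_nhds_zero_of_lt_one hlmaxpos.le hlmax1).mul_const Dr
      rw [zero_mul] at h1
      rcases (h1.eventually (eventually_lt_nhds hr)).exists with ⟨n, hn⟩
      exact ⟨n, le_of_lt (lt_of_le_of_lt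
        (mul_le_mul_of_nonneg_right (hqle n) hDr.le) hn)⟩
    set n := Nat.find hex with hndef
    have hn : q n * Dr ≤ r := Nat.find_spec hex
    obtain ⟨hΨx, hΨdist, hΨsub⟩ := hmain n
    have hqlow : lmin * (r / Dr) ≤ q n := by
      rcases Nat.eq_zero_or_pos n with h0 | h0
      · rw [h0]
        have : q 0 = 1 := by simp [hqdef]
        rw [this]
        have h2 : r / Dr ≤ 1 := div_le_one_of_le₀ hrD hDr.le
        calc lmin * (r / Dr) ≤ 1 * 1 :=
              mul_le_mul hlmin1 h2 (div_nonneg hr.le hDr.le) zero_le_one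
          _ = 1 := one_mul 1
      · obtain ⟨m, hm⟩ := Nat.exists_eq_succ_of_ne_zero h0.ne'
        have hnot : ¬ (q m * Dr ≤ r) :=
          Nat.find_min hex (by rw [← hndef, hm]; exact Nat.lt_succ_self m)
        push_neg at hnot
        have h2 : r / Dr ≤ q m := (div_le_iff₀ hDr).2 hnot.le
        have h3 : q n = q m * L (g m) := by
          rw [hm, hqdef]; exact Finset.prod_range_succ _ m
        rw [h3]
        calc lmin * (r / Dr) ≤ L (g m) * q m :=
              mul_le_mul (hlminle (g m)) h2 (div_nonneg hr.le hDr.le) (hLpos (g m)).le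
          _ = q m * L (g m) := mul_comm _ _
      -- inclusion
    have hincl : Ψ n '' K ⊆ K ∩ Metric.closedBall x r := by
      rintro - ⟨y, hy, rfl⟩
      refine ⟨hΨsub (mem_image_of_mem _ hy), ?_⟩
      rw [Metric.mem_closedBall]
      calc dist (Ψ n y) x = dist (Ψ n y) (Ψ n (sq n : X)) := by rw [hΨx]
        _ = q n * dist y (sq n : X) := hΨdist _ _
        _ ≤ q n * Dr := by
            apply mul_le_mul_of_nonneg_left _ (hqpos n).le
            exact Metric.dist_le_diam_of_mem hKc.isBounded hy (sq n).2
        _ ≤ r := hn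
    -- measure bound via antilipschitz
    have hanti : AntilipschitzWith ((q n)⁻¹).toNNReal (Ψ n) := by
      apply AntilipschitzWith.of_le_mul_dist
      intro a b
      rw [Real.coe_toNNReal _ (inv_nonneg.2 (hqpos n).le), hΨdist a b]
      rw [← mul_assoc, inv_mul_cancel₀ (hqpos n).ne', one_mul]
    have hA := hanti.le_hausdorffMeasure_image hs.le K
    have hqcoe : (((q n)⁻¹).toNNReal : ℝ≥0∞) = ENNReal.ofReal ((q n)⁻¹) := rfl
    rw [hqcoe, ENNReal.ofReal_rpow_of_pos (inv_pos.2 (hqpos n))] at hA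
    -- conclude
    have hreal : C⁻¹ * r ^ s ≤ mR * q n ^ s := by
      have hCge : Dr ^ s / (mR * lmin ^ s) ≤ C := le_trans (le_max_right _ _) (le_max_right _ _)
      have hden : 0 < mR * lmin ^ s := mul_pos hmR (Real.rpow_pos_of_pos hlminpos s)
      have hC0 : 0 < C := lt_of_lt_of_le one_pos (le_max_left _ _)
      have hCinv : C⁻¹ ≤ (mR * lmin ^ s) / Dr ^ s := by
        rw [inv_le_comm₀ hC0 (div_pos hden (Real.rpow_pos_of_pos hDr s)), inv_div]
        exact hCge
      have hq2 : (lmin * (r / Dr)) ^ s ≤ q n ^ s :=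
        Real.rpow_le_rpow (mul_nonneg hlminpos.le (div_nonneg hr.le hDr.le)) hqlow hs.le
      have hq3 : (lmin * (r / Dr)) ^ s = lmin ^ s * (r ^ s / Dr ^ s) := by
        rw [Real.mul_rpow hlminpos.le (div_nonneg hr.le hDr.le),
          Real.div_rpow hr.le hDr.le]
      calc C⁻¹ * r ^ s ≤ ((mR * lmin ^ s) / Dr ^ s) * r ^ s :=
            mul_le_mul_of_nonneg_right hCinv hrs.le
        _ = mR * (lmin ^ s * (r ^ s / Dr ^ s)) := by ring
        _ = mR * (lmin * (r / Dr)) ^ s := by rw [hq3]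
        _ ≤ mR * q n ^ s := mul_le_mul_of_nonneg_left hq2 hmR.le
    calc ENNReal.ofReal (C⁻¹ * r ^ s) ≤ ENNReal.ofReal (mR * q n ^ s) :=
          ENNReal.ofReal_le_ofReal hreal
      _ = ENNReal.ofReal (q n ^ s) * ENNReal.ofReal mR := by
          rw [← ENNReal.ofReal_mul (Real.rpow_nonneg (hqpos n).le s), mul_comm]
      _ = ENNReal.ofReal (q n ^ s) * μH[s] K := by rw [← hμK]
      _ ≤ ENNReal.ofReal (q n ^ s) *
            (ENNReal.ofReal ((q n)⁻¹ ^ s) * μH[s] (Ψ n '' K)) := by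
          exact mul_le_mul_right hA _
      _ = ENNReal.ofReal (q n ^ s * (q n)⁻¹ ^ s) * μH[s] (Ψ n '' K) := by
          rw [← mul_assoc, ← ENNReal.ofReal_mul (Real.rpow_nonneg (hqpos n).le s)]
      _ = μH[s] (Ψ n '' K) := by
          rw [← Real.mul_rpow (hqpos n).le (inv_nonneg.2 (hqpos n).le),
            mul_inv_cancel₀ (hqpos n).ne', Real.one_rpow, ENNReal.ofReal_one, one_mul]
      _ ≤ μH[s] (K ∩ Metric.closedBall x r) := measure_mono hincl
  · -- UPPER BOUND
    set B := Metric.closedBall x r with hB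
    set F := K ∩ B with hF
    set E := K \ B with hE
    have hsplit : μH[s] F + μH[s] E = μH[s] K :=
      measure_inter_add_diff K measurableSet_closedBall
    have hEfin : μH[s] E ≠ ∞ :=
      ne_top_of_le_ne_top hfin (measure_mono diff_subset)
    have hdiamF : EMetric.diam F ^ s ≤ ENNReal.ofReal ((2 * r) ^ s) := by
      have h1 : EMetric.diam F ≤ ENNReal.ofReal (2 * r) := by
        calc EMetric.diam F ≤ EMetric.diam B := EMetric.diam_mono inter_subset_right
          _ = EMetric.diam (Metric.closedEBall x (ENNReal.ofReal r)) := by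
              rw [Metric.emetric_closedBall hr.le]
          _ ≤ 2 * ENNReal.ofReal r := EMetric.diam_closedBall
          _ = ENNReal.ofReal (2 * r) := by
              rw [ENNReal.ofReal_mul (by norm_num)]
              simp
      calc EMetric.diam F ^ s ≤ ENNReal.ofReal (2 * r) ^ s :=
            ENNReal.rpow_le_rpow h1 hs.le
        _ = ENNReal.ofReal ((2 * r) ^ s) := by
            rw [← ENNReal.ofReal_rpow_of_pos (by linarith)]
    have hupper : μH[s] F ≤ ENNReal.ofReal ((2 * r) ^ s) := by
      apply ENNReal.le_of_forall_pos_le_add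
      intro ε hε _
      -- extract an efficient cover of E
      have hlt : μH[s] E < μH[s] E + ε :=
        ENNReal.lt_add_right hEfin (by exact_mod_cast hε.ne')
      have hinf : (⨅ (t : ℕ → Set X) (_ : E ⊆ ⋃ m, t m)
          (_ : ∀ m, EMetric.diam (t m) ≤ 1),
            ∑' m, ⨆ _ : (t m).Nonempty, EMetric.diam (t m) ^ s) ≤ μH[s] E := by
        rw [Measure.hausdorffMeasure_apply]
        exact le_iSup₂ (f := fun (r : ℝ≥0∞) (_ : 0 < r) =>
          ⨅ (t : ℕ → Set X) (_ : E ⊆ ⋃ m, t m) (_ : ∀ m, EMetric.diam (t m) ≤ r),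
            ∑' m, ⨆ _ : (t m).Nonempty, EMetric.diam (t m) ^ s) 1 zero_lt_one
      obtain ⟨V, hV1⟩ := iInf_lt_iff.1 (lt_of_le_of_lt hinf hlt)
      obtain ⟨hVcov, hV2⟩ := iInf_lt_iff.1 hV1
      obtain ⟨hVdiam, hVsum⟩ := iInf_lt_iff.1 hV2
      have hVs : (∑' m, EMetric.diam (V m) ^ s) ≤ μH[s] E + ε := by
        refine le_trans (ENNReal.tsum_le_tsum fun m => ?_) hVsum.le
        rcases eq_empty_or_nonempty (V m) with h | h
        · have he : EMetric.diam (∅ : Set X) = 0 := EMetric.diam_empty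
          simp [h, ENNReal.zero_rpow_of_pos hs, he]
        · simp [h]
      -- apply the iteration bound with the combined cover
      set U : ℕ → Set X := fun j => Nat.casesOn j F V with hU
      have hKU : K ⊆ ⋃ j, U j := by
        intro y hy
        by_cases hyB : y ∈ B
        · exact mem_iUnion.2 ⟨0, ⟨hy, hyB⟩⟩
        · rcases mem_iUnion.1 (hVcov ⟨hy, hyB⟩) with ⟨m, hm⟩
          exact mem_iUnion.2 ⟨m + 1, hm⟩
      have hIter := iterbound hk φ c hcLip hc1 K hsub hcov hs hsum1 U hKU
      have hUsum : (∑' j : ℕ, EMetric.diam (U j) ^ s)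
          = EMetric.diam F ^ s + ∑' m, EMetric.diam (V m) ^ s := by
        rw [tsum_eq_zero_add' ENNReal.summable]
        rfl
      rw [hUsum] at hIter
      have hKle : μH[s] K ≤ (ENNReal.ofReal ((2 * r) ^ s) + ε) + μH[s] E := by
        calc μH[s] K ≤ EMetric.diam F ^ s + ∑' m, EMetric.diam (V m) ^ s := hIter
          _ ≤ ENNReal.ofReal ((2 * r) ^ s) + (μH[s] E + ε) := add_le_add hdiamF hVs
          _ = (ENNReal.ofReal ((2 * r) ^ s) + ε) + μH[s] E := by ring
      rw [← hsplit] at hKle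
      exact (ENNReal.add_le_add_iff_right hEfin).1 hKle
    refine hupper.trans (ENNReal.ofReal_le_ofReal ?_)
    have h2 : (2 * r) ^ s = 2 ^ s * r ^ s := Real.mul_rpow (by norm_num) hr.le
    rw [h2]
    have hC2 : (2:ℝ) ^ s ≤ C := le_trans (le_max_left _ _) (le_max_right _ _)
    exact mul_le_mul_of_nonneg_right hC2 hrs.le
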